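/- (LS invariant) Suppose F : [0,∞) → ℝ^{4×4} and W̃ : [0,∞) → ℝ⁴ are differentiable, F(t) is invertible for all t, and they satisfy F' = −γ F φᵀ φ F and W̃' = −γ F φᵀ φ W̃ for a continuous φ : [0,∞) → ℝ^{2×4} and γ > 0. Then F(t)⁻¹ W̃(t) is constant; in particular, if F(0) = (1/f₀) I₄ then W̃(t) = f₀ F(t) W̃(0) for all t. -/

import Mathlib

open Matrix Set

attribute [local instance] Matrix.normedAddCommGroup Matrix.normedSpace

private lemma mulVec_norm_le4 (M : Matrix (Fin 4) (Fin 4) ℝ) (x : Fin 4 → ℝ) :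
    ‖M.mulVec x‖ ≤ 4 * ‖M‖ * ‖x‖ := by
  rw [pi_norm_le_iff_of_nonneg (by positivity)]
  intro i
  calc ‖(M.mulVec x) i‖ = |∑ j, M i j * x j| := rfl
    _ ≤ ∑ j, |M i j * x j| := Finset.abs_sum_le_sum_abs _ _
    _ ≤ ∑ _j : Fin 4, ‖M‖ * ‖x‖ := by
        refine Finset.sum_le_sum fun j _ => ?_
        rw [abs_mul]
        exact mul_le_mul (M.norm_entry_le_entrywise_sup_norm)
          (norm_le_pi_norm x j) (abs_nonneg _) (norm_nonneg _)
    _ = 4 * ‖M‖ * ‖x‖ := by simp [mul_assoc]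

theorem ls_invariant (γ f0 : ℝ) (hγ : 0 < γ) (hf0 : 0 < f0)
    (φ : ℝ → Matrix (Fin 2) (Fin 4) ℝ) (hφ : Continuous φ)
    (F : ℝ → Matrix (Fin 4) (Fin 4) ℝ) (Wt : ℝ → Fin 4 → ℝ)
    (hFinv : ∀ t ≥ 0, IsUnit (F t))
    (hF : ∀ t ≥ 0, HasDerivAt F (-(γ • (F t * (φ t)ᵀ * φ t * F t))) t)
    (hW : ∀ t ≥ 0, HasDerivAt Wt (-(γ • ((F t * (φ t)ᵀ * φ t).mulVec (Wt t)))) t) :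
    (∀ t ≥ 0, (F t)⁻¹.mulVec (Wt t) = (F 0)⁻¹.mulVec (Wt 0)) ∧
    (F 0 = (1 / f0) • 1 → ∀ t ≥ 0, Wt t = f0 • (F t).mulVec (Wt 0)) := by
  -- the candidate constant
  set c : Fin 4 → ℝ := (F 0)⁻¹.mulVec (Wt 0) with hc
  -- main claim: Wt t = F t *ᵥ c for all t ≥ 0
  have key : ∀ t ≥ 0, Wt t = (F t).mulVec c := by
    intro b hb
    -- clamping to [0, b]
    set τ : ℝ → ℝ := fun t => min (max t 0) b with hτ
    have hτ_cont : Continuous τ := (continuous_id.max continuous_const).min continuous_const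
    have hτ_mem : ∀ t, τ t ∈ Icc 0 b := fun t =>
      ⟨le_min (le_max_right _ _) hb, min_le_right _ _⟩
    have hτ_eq : ∀ t ∈ Icc 0 b, τ t = t := by
      intro t ht
      simp [hτ, max_eq_left ht.1, min_eq_left ht.2]
    -- the clamped coefficient matrix
    set A : ℝ → Matrix (Fin 4) (Fin 4) ℝ := fun t => F (τ t) * (φ (τ t))ᵀ * φ (τ t) with hA
    have hFτ : Continuous fun t => F (τ t) := by
      rw [continuous_iff_continuousAt]
      intro t
      exact ((hF (τ t) (hτ_mem t).1).continuousAt).comp hτ_cont.continuousAt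
    have hA_cont : Continuous A :=
      (hFτ.matrix_mul (hφ.comp hτ_cont).matrix_transpose).matrix_mul (hφ.comp hτ_cont)
    obtain ⟨C, hC⟩ := (isCompact_Icc (a := (0:ℝ)) (b := b)).exists_bound_of_continuousOn
      hA_cont.continuousOn
    have hA_bound : ∀ t, ‖A t‖ ≤ max C 0 := by
      intro t
      have h1 : A (τ t) = A t := by
        simp only [hA]
        rw [hτ_eq (τ t) (hτ_mem t)]
      calc ‖A t‖ = ‖A (τ t)‖ := by rw [h1]
        _ ≤ C := hC (τ t) (hτ_mem t)
        _ ≤ max C 0 := le_max_left _ _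
    -- the vector field
    set v : ℝ → (Fin 4 → ℝ) → (Fin 4 → ℝ) := fun t x => -(γ • ((A t).mulVec x)) with hv
    set K : NNReal := Real.toNNReal (γ * (4 * max C 0)) with hK
    have hlip : ∀ t, LipschitzOnWith K (v t) univ := by
      intro t
      refine LipschitzWith.lipschitzOnWith ?_
      refine LipschitzWith.of_dist_le_mul fun x y => ?_
      have h2 : v t x - v t y = -(γ • ((A t).mulVec (x - y))) := by
        simp [hv, Matrix.mulVec_sub, smul_sub]
        abel
      rw [dist_eq_norm, h2, norm_neg, norm_smul, Real.norm_eq_abs, abs_of_pos hγ]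
      have h3 := mulVec_norm_le4 (A t) (x - y)
      have h4 : (K : ℝ) = γ * (4 * max C 0) := by
        rw [hK, Real.coe_toNNReal]
        positivity
      rw [h4, dist_eq_norm x y]
      calc γ * ‖(A t).mulVec (x - y)‖ ≤ γ * (4 * ‖A t‖ * ‖x - y‖) := by
            exact mul_le_mul_of_nonneg_left h3 hγ.le
        _ ≤ γ * (4 * max C 0 * ‖x - y‖) := by
            have := hA_bound t
            have h5 : 4 * ‖A t‖ * ‖x - y‖ ≤ 4 * max C 0 * ‖x - y‖ := by
              apply mul_le_mul_of_nonneg_right _ (norm_nonneg _)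
              nlinarith [norm_nonneg (A t)]
            exact mul_le_mul_of_nonneg_left h5 hγ.le
        _ = γ * (4 * max C 0) * ‖x - y‖ := by ring
    -- the linear map M ↦ M *ᵥ c
    set L : Matrix (Fin 4) (Fin 4) ℝ →ₗ[ℝ] (Fin 4 → ℝ) :=
      { toFun := fun M => M.mulVec c
        map_add' := fun M N => Matrix.add_mulVec M N c
        map_smul' := fun r M => Matrix.smul_mulVec r M c } with hL
    set g : ℝ → Fin 4 → ℝ := fun t => (F t).mulVec c with hg
    -- derivative of g
    have hg' : ∀ t ∈ Ico 0 b, HasDerivWithinAt g (v t (g t)) (Ici t) t := by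
      intro t ht
      have h6 : HasDerivAt g (L (-(γ • (F t * (φ t)ᵀ * φ t * F t)))) t :=
        (L.toContinuousLinearMap.hasFDerivAt.comp_hasDerivAt t (hF t ht.1))
      have h7 : L (-(γ • (F t * (φ t)ᵀ * φ t * F t))) = v t (g t) := by
        simp only [hL, hv, hg, LinearMap.coe_mk, AddHom.coe_mk, hA, hτ_eq t ⟨ht.1, ht.2.le⟩]
        rw [Matrix.neg_mulVec, Matrix.smul_mulVec, ← Matrix.mulVec_mulVec]
      exact (h7 ▸ h6).hasDerivWithinAt
    -- derivative of Wt
    have hW' : ∀ t ∈ Ico 0 b, HasDerivWithinAt Wt (v t (Wt t)) (Ici t) t := by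
      intro t ht
      have h8 : v t (Wt t) = -(γ • ((F t * (φ t)ᵀ * φ t).mulVec (Wt t))) := by
        simp only [hv, hA, hτ_eq t ⟨ht.1, ht.2.le⟩]
      exact (h8 ▸ (hW t ht.1)).hasDerivWithinAt
    -- continuity
    have hWc : ContinuousOn Wt (Icc 0 b) := fun t ht =>
      ((hW t ht.1).continuousAt).continuousWithinAt
    have hgc : ContinuousOn g (Icc 0 b) := fun t ht =>
      ((L.toContinuousLinearMap.hasFDerivAt.comp_hasDerivAt t
        (hF t ht.1)).continuousAt).continuousWithinAt
    have h0 : Wt 0 = g 0 := by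
      simp only [hg, hc, Matrix.mulVec_mulVec]
      rw [Matrix.mul_nonsing_inv _ ((Matrix.isUnit_iff_isUnit_det _).mp (hFinv 0 le_rfl)),
        Matrix.one_mulVec]
    have := ODE_solution_unique_of_mem_Icc_right (fun t _ => hlip t) hWc hW'
      (fun t _ => mem_univ _) hgc hg' (fun t _ => mem_univ _) h0 ⟨hb, le_rfl⟩
    exact this
  have main : ∀ t ≥ 0, (F t)⁻¹.mulVec (Wt t) = (F 0)⁻¹.mulVec (Wt 0) := by
    intro t ht
    rw [key t ht, Matrix.mulVec_mulVec,
      Matrix.nonsing_inv_mul _ ((Matrix.isUnit_iff_isUnit_det _).mp (hFinv t ht)),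
      Matrix.one_mulVec]
  refine ⟨main, fun hF0 t ht => ?_⟩
  have hcval : c = f0 • Wt 0 := by
    rw [hc, hF0]
    have : ((1 / f0 : ℝ) • (1 : Matrix (Fin 4) (Fin 4) ℝ))⁻¹ = f0 • (1 : Matrix (Fin 4) (Fin 4) ℝ) := by
      refine Matrix.inv_eq_left_inv ?_
      rw [Matrix.smul_mul, Matrix.mul_smul, smul_smul, one_mul]
      rw [mul_one_div_cancel hf0.ne', one_smul]
    rw [this, Matrix.smul_mulVec, Matrix.one_mulVec]
  rw [key t ht, hcval, Matrix.mulVec_smul]
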